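/- Let P : (0,∞) → (0,∞) be nondecreasing with ∫₂^∞ dx/P(x) = ∞, let a ≥ 2, and let Φ : [a, ∞) → ℝ be a bounded differentiable function with Φ'(x) > 0 for all x ≥ a. Then liminf_{x → +∞} Φ'(x)·P(x) = 0; in particular, there exists a sequence x_k → +∞ with Φ'(x_k)·P(x_k) → 0. -/

import Mathlib

open Filter Topology

/-- If `P : (0,∞) → (0,∞)` is nondecreasing with `∫₂^∞ dx/P(x) = ∞`,
`a ≥ 2`, and `Φ : [a,∞) → ℝ` is bounded and differentiable with `Φ' > 0`, then
`liminf_{x→+∞} Φ'(x)·P(x) = 0`; in particular some sequence `x_k → +∞` has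
`Φ'(x_k)·P(x_k) → 0`. -/
theorem stmt_7 (P : ℝ → ℝ)
    (hPpos : ∀ x : ℝ, 0 < x → 0 < P x)
    (hPmono : ∀ x y : ℝ, 0 < x → x ≤ y → P x ≤ P y)
    (hPint : ∀ M : ℝ, 0 < M → ∃ N : ℝ, 2 < N ∧ M < ∫ x in (2:ℝ)..N, 1 / P x)
    (a : ℝ) (ha : 2 ≤ a) (Φ Φ' : ℝ → ℝ)
    (hbdd : ∃ C : ℝ, ∀ x : ℝ, a ≤ x → |Φ x| ≤ C)
    (hderiv : ∀ x : ℝ, a ≤ x → HasDerivWithinAt Φ (Φ' x) (Set.Ici a) x)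
    (hpos : ∀ x : ℝ, a ≤ x → 0 < Φ' x) :
    Filter.liminf (fun x : ℝ => Φ' x * P x) Filter.atTop = 0 ∧
      ∃ xseq : ℕ → ℝ, Filter.Tendsto xseq Filter.atTop Filter.atTop ∧
        Filter.Tendsto (fun k => Φ' (xseq k) * P (xseq k)) Filter.atTop (𝓝 0) := by
  -- integrability of 1/P on intervals with endpoints ≥ 2
  have hint : ∀ s t : ℝ, 2 ≤ s → 2 ≤ t →
      IntervalIntegrable (fun x => 1 / P x) MeasureTheory.volume s t := by
    intro s t hs ht
    apply AntitoneOn.intervalIntegrable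
    intro u hu v hv huv
    have h2 : (2:ℝ) ≤ min s t := le_min hs ht
    have hu0 : (0:ℝ) < u := lt_of_lt_of_le (by norm_num) (h2.trans hu.1)
    exact one_div_le_one_div_of_le (hPpos u hu0) (hPmono u v hu0 huv)
  -- key claim
  have key : ∀ ε : ℝ, 0 < ε → ∀ X : ℝ, ∃ x : ℝ, max X a ≤ x ∧ Φ' x * P x < ε := by
    intro ε hε X
    by_contra hcon
    push_neg at hcon
    obtain ⟨C, hC⟩ := hbdd
    set b := max X a with hb
    have hab : a ≤ b := le_max_right _ _
    have h2b : (2:ℝ) ≤ b := ha.trans hab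
    have hC0 : 0 ≤ C := (abs_nonneg _).trans (hC a le_rfl)
    set I := ∫ x in (2:ℝ)..b, 1 / P x with hI
    have hInn : 0 ≤ I := by
      apply intervalIntegral.integral_nonneg h2b
      intro u hu
      have : 0 < P u := hPpos u (lt_of_lt_of_le (by norm_num) hu.1)
      positivity
    have hM : 0 < 2 * C / ε + I + 1 := by positivity
    obtain ⟨N, hN2, hNM⟩ := hPint _ hM
    have hbN : b ≤ N := by
      by_contra hlt
      push_neg at hlt
      have hsplit : (∫ x in (2:ℝ)..N, 1 / P x) + ∫ x in N..b, 1 / P x = I :=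
        intervalIntegral.integral_add_adjacent_intervals (hint 2 N le_rfl hN2.le)
          (hint N b hN2.le h2b)
      have hnn : 0 ≤ ∫ x in N..b, 1 / P x := by
        apply intervalIntegral.integral_nonneg hlt.le
        intro u hu
        have : 0 < P u := hPpos u (lt_of_lt_of_le (by norm_num) (hN2.le.trans hu.1))
        positivity
      have h1 : (∫ x in (2:ℝ)..N, 1 / P x) ≤ I := by linarith
      have h2 : 0 ≤ 2 * C / ε := by positivity
      linarith
    have hsplit : I + ∫ x in b..N, 1 / P x = ∫ x in (2:ℝ)..N, 1 / P x :=
      intervalIntegral.integral_add_adjacent_intervals (hint 2 b le_rfl h2b)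
        (hint b N h2b (h2b.trans hbN))
    have hbig : 2 * C / ε + 1 < ∫ x in b..N, 1 / P x := by linarith
    -- FTC comparison
    have hftc : (∫ y in b..N, ε * (1 / P y)) ≤ Φ N - Φ b := by
      apply intervalIntegral.integral_le_sub_of_hasDeriv_right_of_le hbN
      · intro x hx
        exact ((hderiv x (hab.trans hx.1)).continuousWithinAt).mono
          (fun y hy => hab.trans hy.1 : Set.Icc b N ⊆ Set.Ici a)
      · intro x hx
        exact (hderiv x (hab.trans hx.1.le)).mono
          (fun y hy => le_trans (hab.trans hx.1.le) (le_of_lt hy))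
      · exact (integrableOn_Icc_iff_integrableOn_Ioc enorm_ne_top).2
          ((hint b N h2b (h2b.trans hbN)).const_mul ε).1
      · intro x hx
        have hxa : a ≤ x := hab.trans hx.1.le
        have hbx : b ≤ x := hx.1.le
        have hPx : 0 < P x := hPpos x (lt_of_lt_of_le (by norm_num) (h2b.trans hbx))
        have := hcon x hbx
        rw [mul_one_div, div_le_iff₀ hPx]
        linarith
    rw [intervalIntegral.integral_const_mul] at hftc
    have hΦ : Φ N - Φ b ≤ 2 * C := by
      have h1 := hC N (hab.trans hbN)
      have h2 := hC b hab
      have := abs_le.1 h1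
      have := abs_le.1 h2
      linarith [(abs_le.1 h1).1, (abs_le.1 h1).2, (abs_le.1 h2).1, (abs_le.1 h2).2]
    have : ε * (2 * C / ε + 1) < ε * ∫ x in b..N, 1 / P x :=
      (mul_lt_mul_iff_right₀ hε).2 hbig
    rw [mul_add, mul_div_cancel₀ _ (ne_of_gt hε), mul_one] at this
    linarith
  constructor
  · -- liminf = 0
    have hev : (0:ℝ) ∈ {c : ℝ | ∀ᶠ x in (atTop : Filter ℝ), c ≤ Φ' x * P x} := by
      refine Filter.eventually_atTop.2 ⟨a, fun x hx => ?_⟩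
      exact mul_nonneg (hpos x hx).le
        (hPpos x (lt_of_lt_of_le (by norm_num) (ha.trans hx))).le
    have hub : ∀ c ∈ {c : ℝ | ∀ᶠ x in (atTop : Filter ℝ), c ≤ Φ' x * P x}, c ≤ 0 := by
      intro c hc
      by_contra hc0
      push_neg at hc0
      obtain ⟨X, hX⟩ := Filter.eventually_atTop.1 hc
      obtain ⟨x, hx1, hx2⟩ := key c hc0 X
      exact absurd (hX x ((le_max_left X a).trans hx1)) (not_le.2 hx2)
    rw [Filter.liminf_eq]
    exact le_antisymm (csSup_le ⟨0, hev⟩ hub) (le_csSup ⟨0, fun c hc => hub c hc⟩ hev)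
  · -- the sequence
    choose xseq hx1 hx2 using fun k : ℕ => key (1 / (k + 1)) (by positivity) k
    refine ⟨xseq, ?_, ?_⟩
    · exact tendsto_atTop_mono
        (fun (k : ℕ) => (le_max_left (k:ℝ) a).trans (hx1 k)) tendsto_natCast_atTop_atTop
    · have hnn : ∀ k : ℕ, 0 ≤ Φ' (xseq k) * P (xseq k) := by
        intro k
        have hxa : a ≤ xseq k := (le_max_right _ _).trans (hx1 k)
        exact mul_nonneg (hpos _ hxa).le
          (hPpos _ (lt_of_lt_of_le (by norm_num) (ha.trans hxa))).le
      exact tendsto_of_tendsto_of_tendsto_of_le_of_le tendsto_const_nhds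
        tendsto_one_div_add_atTop_nhds_zero_nat hnn (fun k => (hx2 k).le)
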